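/- Let R be a ring, T a right R-module, and let 0 → T → Q₀ →ζ→ Q₁ → 0 be a short exact sequence of right R-modules with Q₀ and Q₁ injective (so that T has injective dimension at most 1). Then 𝓑_ζ = ⊥T; consequently, T is cosilting with respect to ζ (i.e. Cogen(T) = 𝓑_ζ) if and only if T is cotilting (i.e. Cogen(T) = ⊥T). -/

import Mathlib

universe u v

open Function

variable (R : Type u) [Ring R]

/-- `X ∈ 𝓑_ζ`: every map `X → Q₁` factors through `ζ`. -/
def MemB {Q₀ Q₁ : Type v} [AddCommGroup Q₀] [Module R Q₀] [AddCommGroup Q₁] [Module R Q₁]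
    (ζ : Q₀ →ₗ[R] Q₁) (X : Type v) [AddCommGroup X] [Module R X] : Prop :=
  Surjective fun g : X →ₗ[R] Q₀ => ζ ∘ₗ g

/-- `X ∈ Cogen T`: `X` embeds into a direct product of copies of `T`. -/
def MemCogen (T : Type v) [AddCommGroup T] [Module R T]
    (X : Type v) [AddCommGroup X] [Module R X] : Prop :=
  ∃ (ι : Type v) (f : X →ₗ[R] (ι → T)), Injective f

/-- `Ext¹_R(X,T) = 0`, expressed as: every short exact sequence `0 → T → Y → X → 0` splits. -/
def Ext1Vanishes (X T : Type v) [AddCommGroup X] [Module R X] [AddCommGroup T] [Module R T] :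
    Prop :=
  ∀ (Y : Type v) [AddCommGroup Y] [Module R Y] (i : T →ₗ[R] Y) (p : Y →ₗ[R] X),
    Injective i → Surjective p → LinearMap.range i = LinearMap.ker p →
    ∃ s : X →ₗ[R] Y, p ∘ₗ s = LinearMap.id


/-- A retraction of the injection in a short exact sequence yields a section of the
projection. -/
lemma section_of_retraction {T Y X : Type v} [AddCommGroup T] [Module R T]
    [AddCommGroup Y] [Module R Y] [AddCommGroup X] [Module R X]
    (i : T →ₗ[R] Y) (p : Y →ₗ[R] X) (hp : Surjective p)
    (hexact : LinearMap.range i = LinearMap.ker p)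
    (r : Y →ₗ[R] T) (hr : r ∘ₗ i = LinearMap.id) :
    ∃ s : X →ₗ[R] Y, p ∘ₗ s = LinearMap.id := by
  -- `y ↦ y - i (r y)` kills `range i` and is fixed (mod ker r∘...) ; descend along p
  -- define s directly: for x, pick y with p y = x, and set s x = y - i (r y).
  -- This is well-defined: if p y = p y', then y - y' ∈ ker p = range i, say y - y' = i t;
  -- then (y - i (r y)) - (y' - i (r y')) = i t - i (r (i t)) = i t - i t = 0.
  have hbij : Bijective (LinearMap.prod r p) := by
    constructor
    · intro y y' h
      have h1 : r y = r y' := congrArg Prod.fst h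
      have h2 : p y = p y' := congrArg Prod.snd h
      have : y - y' ∈ LinearMap.ker p := by simp [LinearMap.mem_ker, h2]
      rw [← hexact] at this
      obtain ⟨t, ht⟩ := this
      have ht' : t = 0 := by
        have := congrArg (fun m => m t) hr
        simp only [LinearMap.comp_apply, LinearMap.id_apply] at this
        calc t = r (i t) := this.symm
          _ = r (y - y') := by rw [ht]
          _ = 0 := by rw [map_sub, h1, sub_self]
      have : y - y' = 0 := by rw [← ht, ht', map_zero]
      exact sub_eq_zero.mp this
    · rintro ⟨t, x⟩
      obtain ⟨y, hy⟩ := hp x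
      refine ⟨y + i (t - r y), ?_⟩
      have hri : ∀ a, r (i a) = a := fun a => by
        have := congrArg (fun m => m a) hr
        simpa using this
      have hpi : ∀ a, p (i a) = 0 := fun a => by
        have : i a ∈ LinearMap.ker p := hexact ▸ LinearMap.mem_range_self i a
        exact this
      simp [LinearMap.prod_apply, hri, hpi, hy]
  let e : Y ≃ₗ[R] T × X := LinearEquiv.ofBijective (LinearMap.prod r p) hbij
  refine ⟨e.symm.toLinearMap ∘ₗ LinearMap.inr R T X, ?_⟩
  ext x
  have key : e (e.symm (0, x)) = (0, x) := e.apply_symm_apply _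
  have h2 := congrArg Prod.snd key
  simp only [e, LinearEquiv.ofBijective_apply, LinearMap.prod_apply, Pi.prod] at h2
  simpa using h2

/-- If `0 → T → Q₀ → Q₁ → 0` is exact with `Q₀`, `Q₁` injective, then `𝓑_ζ = ⊥T`;
consequently `T` is cosilting with respect to `ζ` iff `T` is cotilting. -/
theorem stmt_8 {Q₀ Q₁ : Type v} [AddCommGroup Q₀] [Module R Q₀] [AddCommGroup Q₁] [Module R Q₁]
    (ζ : Q₀ →ₗ[R] Q₁) [Module.Injective R Q₀] [Module.Injective R Q₁]
    (T : Type v) [AddCommGroup T] [Module R T]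
    (f : T →ₗ[R] Q₀) (hf : Injective f) (hex : LinearMap.range f = LinearMap.ker ζ)
    (hζ : Surjective ζ) :
    (∀ (X : Type v) [AddCommGroup X] [Module R X], MemB R ζ X ↔ Ext1Vanishes R X T) ∧
    ((∀ (X : Type v) [AddCommGroup X] [Module R X], MemCogen R T X ↔ MemB R ζ X) ↔
     (∀ (X : Type v) [AddCommGroup X] [Module R X], MemCogen R T X ↔ Ext1Vanishes R X T)) := by
  have h1 : ∀ (X : Type v) [AddCommGroup X] [Module R X], MemB R ζ X ↔ Ext1Vanishes R X T := by
    intro X _ _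
    constructor
    · -- MemB → Ext1Vanishes
      intro hB Y _ _ i p hi hp hexact
      -- extend f along i using injectivity of Q₀
      obtain ⟨h, hh⟩ := Module.Injective.out (R := R) (Q := Q₀) i hi f
      -- descend ζ ∘ h along p
      have hsub : LinearMap.ker p ≤ LinearMap.ker (ζ ∘ₗ h) := by
        intro y hy
        rw [← hexact] at hy
        obtain ⟨t, ht⟩ := hy
        simp only [LinearMap.mem_ker, LinearMap.comp_apply, ← ht, hh]
        have : f t ∈ LinearMap.ker ζ := hex ▸ LinearMap.mem_range_self f t
        exact this
      set eq := LinearMap.quotKerEquivOfSurjective p hp with heq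
      set g : X →ₗ[R] Q₁ :=
        (LinearMap.ker p).liftQ (ζ ∘ₗ h) hsub ∘ₗ eq.symm.toLinearMap with hg
      have hgp : ∀ y, g (p y) = ζ (h y) := by
        intro y
        have h1 : eq.symm (p y) = Submodule.Quotient.mk y := by
          apply eq.injective
          simp only [LinearEquiv.apply_symm_apply]
          rfl
        simp only [hg, LinearMap.comp_apply, LinearEquiv.coe_coe, h1]
        rfl
      obtain ⟨k, hk⟩ := hB g
      have hk' : ∀ x, ζ (k x) = g x := fun x => congrArg (fun m => m x) hk
      -- h - k ∘ p lands in ker ζ = range f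
      have hrange : ∀ y, (h - k ∘ₗ p) y ∈ LinearMap.range f := by
        intro y
        rw [hex]
        simp only [LinearMap.sub_apply, LinearMap.comp_apply, LinearMap.mem_ker, map_sub,
          hk', hgp]
        exact sub_self _
      -- retraction r : Y → T
      set r : Y →ₗ[R] T := (LinearEquiv.ofInjective f hf).symm.toLinearMap ∘ₗ
        (LinearMap.codRestrict (LinearMap.range f) (h - k ∘ₗ p) hrange) with hrdef
      have hfr : ∀ y, f (r y) = (h - k ∘ₗ p) y := by
        intro y
        simp only [hrdef, LinearMap.comp_apply, LinearEquiv.coe_coe]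
        have : ∀ z : LinearMap.range f, f ((LinearEquiv.ofInjective f hf).symm z) = z := by
          intro z
          have := (LinearEquiv.ofInjective f hf).apply_symm_apply z
          exact congrArg Subtype.val this
        rw [this]
        rfl
      have hri : r ∘ₗ i = LinearMap.id := by
        ext t
        apply hf
        simp only [LinearMap.comp_apply, LinearMap.id_apply, hfr]
        have hpi : p (i t) = 0 := by
          have : i t ∈ LinearMap.ker p := hexact ▸ LinearMap.mem_range_self i t
          exact this
        simp [LinearMap.sub_apply, LinearMap.comp_apply, hpi, hh]
      exact section_of_retraction R i p hp hexact r hri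
    · -- Ext1Vanishes → MemB
      intro hE g
      -- pullback of g and ζ
      set Y : Submodule R (X × Q₀) :=
        LinearMap.ker (g ∘ₗ LinearMap.fst R X Q₀ - ζ ∘ₗ LinearMap.snd R X Q₀) with hY
      have memY : ∀ z : X × Q₀, z ∈ Y ↔ g z.1 = ζ z.2 := by
        intro z
        simp only [hY, LinearMap.mem_ker, LinearMap.sub_apply, LinearMap.comp_apply,
          LinearMap.fst_apply, LinearMap.snd_apply, sub_eq_zero]
      set p : Y →ₗ[R] X := LinearMap.fst R X Q₀ ∘ₗ Y.subtype with hpdef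
      set i : T →ₗ[R] Y := LinearMap.codRestrict Y
        (LinearMap.prod 0 f) (fun t => by
          rw [memY]
          simp only [LinearMap.prod_apply, Function.prod, LinearMap.zero_apply, map_zero]
          have : f t ∈ LinearMap.ker ζ := hex ▸ LinearMap.mem_range_self f t
          exact this.symm) with hidef
      have hi : Injective i := by
        intro t t' h
        apply hf
        have := congrArg (fun z : Y => (z : X × Q₀).2) h
        simpa [hidef] using this
      have hp : Surjective p := by
        intro x
        obtain ⟨q, hq⟩ := hζ (g x)
        exact ⟨⟨(x, q), (memY _).mpr hq.symm⟩, rfl⟩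
      have hex2 : LinearMap.range i = LinearMap.ker p := by
        apply le_antisymm
        · rintro _ ⟨t, rfl⟩
          simp [hpdef, hidef, LinearMap.mem_ker]
        · rintro ⟨⟨x, q⟩, hz⟩ hker
          have hx : x = 0 := hker
          have hq : ζ q = 0 := by
            have := (memY (x, q)).mp hz
            rw [hx, map_zero] at this
            exact this.symm
          have : q ∈ LinearMap.range f := hex ▸ hq
          obtain ⟨t, ht⟩ := this
          refine ⟨t, ?_⟩
          apply Subtype.ext
          simp [hidef, ht, hx]
      obtain ⟨s, hs⟩ := hE Y i p hi hp hex2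
      refine ⟨LinearMap.snd R X Q₀ ∘ₗ Y.subtype ∘ₗ s, ?_⟩
      ext x
      have hsx := (memY (s x : X × Q₀)).mp (s x).2
      have hpx : ((s x : X × Q₀)).1 = x := congrArg (fun m => m x) hs
      simp only [LinearMap.comp_apply, LinearMap.snd_apply, Submodule.coe_subtype]
      rw [← hsx, hpx]
  refine ⟨h1, ?_, ?_⟩
  · intro H X _ _; rw [← h1]; exact H X
  · intro H X _ _; rw [h1]; exact H X
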